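/- Let k ≥ 0. Any two proper 4-colorings f and g of Q_k satisfying f(b_0) = f(d_0) and g(b_0) = g(d_0) (type II colorings) are connected, i.e. they are related by the reflexive-transitive closure of the relation 'the two colorings have a common color class'. Consequently, all color classes of all type II colorings of Q_k lie in a single connected component of the 4-coloring complex B(Q_k). -/

import Mathlib

/-- A proper 4-coloring of a simple graph `G`. -/
def IsProperColoring {V : Type*} (G : SimpleGraph V) (f : V → Fin 4) : Prop :=
  ∀ ⦃u v : V⦄, G.Adj u v → f u ≠ f v

/-- `kempeCount G f a b` is the number of `ab`-Kempe chains of `f`, i.e. the number of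
connected components of the subgraph of `G` induced on `f⁻¹({a, b})`. -/
noncomputable def kempeCount {V : Type*} (G : SimpleGraph V) (f : V → Fin 4)
    (a b : Fin 4) : ℕ :=
  Nat.card ((G.induce {v | f v = a ∨ f v = b}).ConnectedComponent)

/-- Tutte's quantity `J_a(f) = p(a,b) + p(a,c) + p(a,d) - p(b,c) - p(b,d) - p(c,d)`,
where `{b, c, d} = Fin 4 \ {a}`. -/
noncomputable def Jcol {V : Type*} (G : SimpleGraph V) (f : V → Fin 4) (a : Fin 4) : ℤ :=
  (∑ x ∈ Finset.univ.erase a, (kempeCount G f a x : ℤ)) -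
    ∑ x ∈ Finset.univ.erase a,
      ∑ y ∈ (Finset.univ.erase a).filter (fun y => x < y), (kempeCount G f x y : ℤ)

/-- The coloring-partition of `f`: the set of its nonempty color classes. -/
def colPart {V : Type*} (f : V → Fin 4) : Set (Set V) :=
  {A | A.Nonempty ∧ ∃ c, A = f ⁻¹' {c}}

/-- `P` is a coloring-partition of `G` if it is the coloring-partition of some proper
4-coloring of `G`. -/
def IsColoringPartition {V : Type*} (G : SimpleGraph V) (P : Set (Set V)) : Prop :=
  ∃ f, IsProperColoring G f ∧ P = colPart f

/-- The set of all color classes of proper 4-colorings of `G`. -/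
def colorClasses {V : Type*} (G : SimpleGraph V) : Set (Set V) :=
  {A | A.Nonempty ∧ ∃ f c, IsProperColoring G f ∧ A = f ⁻¹' {c}}

/-- The 4-coloring complex `B(G)`: vertices are color classes of proper 4-colorings of `G`,
two distinct classes being adjacent iff they are color classes of a common proper
4-coloring. -/
def colorComplex {V : Type*} (G : SimpleGraph V) : SimpleGraph (colorClasses G) :=
  SimpleGraph.fromRel (fun A B => ∃ f, IsProperColoring G f ∧
    (∃ c, (A : Set V) = f ⁻¹' {c}) ∧ (∃ c, (B : Set V) = f ⁻¹' {c}))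

/-- Two proper 4-colorings are adjacent if they have a common (nonempty) color class. -/
def ColAdj {V : Type*} (G : SimpleGraph V) (f g : V → Fin 4) : Prop :=
  IsProperColoring G f ∧ IsProperColoring G g ∧
    ∃ c c', (f ⁻¹' {c}).Nonempty ∧ f ⁻¹' {c} = g ⁻¹' {c'}

/-- Generating relation for the triangulation `Q_k`.  The vertex `(i, 0)` is `a_i`,
`(i, 1)` is `b_i`, `(i, 2)` is `c_i` and `(i, 3)` is `d_i`.  Edges: the 4-cycles
`a_i b_i c_i d_i`, connecting edges between consecutive cycles, and the chords
`a_0 c_0` and `a_{k+1} c_{k+1}`. -/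
def qkRel (k : ℕ) (u v : Fin (k + 2) × Fin 4) : Prop :=
  (u.1 = v.1 ∧ v.2 = u.2 + 1) ∨
  ((v.1 : ℕ) = (u.1 : ℕ) + 1 ∧ (v.2 = u.2 ∨ v.2 = u.2 + 1)) ∨
  ((u.1 : ℕ) = 0 ∧ (v.1 : ℕ) = 0 ∧ u.2 = 0 ∧ v.2 = 2) ∨
  ((u.1 : ℕ) = k + 1 ∧ (v.1 : ℕ) = k + 1 ∧ u.2 = 0 ∧ v.2 = 2)

/-- The triangulation `Q_k`. -/
def Qk (k : ℕ) : SimpleGraph (Fin (k + 2) × Fin 4) := SimpleGraph.fromRel (qkRel k)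


section QkAux

set_option maxRecDepth 100000

/-- Position pattern of a layer: `false` = BD-shape `(A,B,C,B)`, `true` = AC-shape `(x,y,x,z)`. -/
def pos4 : Bool → Fin 4 → Fin 4
  | false => ![0,1,2,1]
  | true  => ![0,1,0,2]

/-- Transition permutation between consecutive layer quadruples. -/
def stp : Bool → Bool → Fin 4 → Fin 4
  | false, false => ![2,3,0,1]
  | false, true  => ![3,2,0,1]
  | true,  false => ![1,3,2,0]
  | true,  true  => ![3,2,1,0]

def idx4 : Bool → Fin 4 := fun b => cond b 0 1

def qseq (s : ℕ → Bool) : ℕ → Fin 4 → Fin 4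
  | 0 => id
  | (i+1) => qseq s i ∘ stp (s i) (s (i+1))

def Phi (n : ℕ) (q0 : Fin 4 → Fin 4) (s : ℕ → Bool) (v : Fin n × Fin 4) : Fin 4 :=
  q0 (qseq s (v.1 : ℕ) (pos4 (s (v.1 : ℕ)) v.2))

lemma stp_inj : ∀ b b', Function.Injective (stp b b') := by decide

lemma qseq_inj (s : ℕ → Bool) : ∀ i, Function.Injective (qseq s i)
  | 0 => fun _ _ h => h
  | (i+1) => (qseq_inj s i).comp (stp_inj _ _)

lemma qseq_congr (s s' : ℕ → Bool) : ∀ i, (∀ j, j ≤ i → s j = s' j) → qseq s i = qseq s' i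
  | 0, _ => rfl
  | (i+1), h => by
      show qseq s i ∘ stp (s i) (s (i+1)) = qseq s' i ∘ stp (s' i) (s' (i+1))
      rw [qseq_congr s s' i (fun j hj => h j (Nat.le_succ_of_le hj)),
        h i (Nat.le_succ i), h (i+1) le_rfl]

lemma pos4_cyc : ∀ b j, pos4 b j ≠ pos4 b (j+1) := by decide
lemma stp_conn1 : ∀ b b' j, pos4 b j ≠ stp b b' (pos4 b' j) := by decide
lemma stp_conn2 : ∀ b b' j, pos4 b j ≠ stp b b' (pos4 b' (j+1)) := by decide
lemma pos4_chord : pos4 false 0 ≠ pos4 false 2 := by decide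
lemma pos4_true_chord : pos4 true 0 = pos4 true 2 := by decide
lemma pos4_idx : ∀ b, pos4 b (idx4 b) = idx4 b := by decide
lemma flip_mid : ∀ b c j, stp b c (pos4 c j) ≠ idx4 b := by decide
lemma flip_tail : ∀ b c d x,
    (stp b (!c) (stp (!c) d x) = idx4 b ↔ stp b c (stp c d x) = idx4 b) := by decide

lemma step_exists : ∀ (L : Fin 4 → Fin 4) (b : Bool),
    (∀ j, L j ≠ L (j+1)) →
    (∀ j, pos4 b j ≠ L j) →
    (∀ j, pos4 b j ≠ L (j+1)) →
    ∃ b', ∀ j, L j = stp b b' (pos4 b' j) := by decide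

lemma layer0_inj : ∀ A B C : Fin 4, A ≠ B → B ≠ C → A ≠ C →
    Function.Injective ![A,B,C,2-(A+B+C)] := by decide

lemma step_exists' (q : Fin 4 → Fin 4) (hq : Function.Injective q) (L : Fin 4 → Fin 4)
    (b : Bool) (hc : ∀ j, L j ≠ L (j+1)) (h1 : ∀ j, q (pos4 b j) ≠ L j)
    (h2 : ∀ j, q (pos4 b j) ≠ L (j+1)) :
    ∃ b', ∀ j, L j = q (stp b b' (pos4 b' j)) := by
  have hbij : Function.Bijective q := Finite.injective_iff_bijective.mp hq
  let e : Fin 4 ≃ Fin 4 := Equiv.ofBijective q hbij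
  have he : ∀ x, e x = q x := fun _ => rfl
  obtain ⟨b', hb'⟩ := step_exists (fun j => e.symm (L j)) b
    (fun j h => hc j (e.symm.injective h))
    (fun j h => h1 j (by rw [← he, h]; exact e.apply_symm_apply (L j)))
    (fun j h => h2 j (by rw [← he, h]; exact e.apply_symm_apply (L (j+1))))
  refine ⟨b', fun j => ?_⟩
  rw [← he, ← hb' j]
  exact (e.apply_symm_apply (L j)).symm

end QkAux

set_option maxRecDepth 100000

lemma qk_adj {k : ℕ} {u v : Fin (k+2) × Fin 4} (h : qkRel k u v) (hne : u ≠ v) :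
    (Qk k).Adj u v := by
  rw [Qk, SimpleGraph.fromRel_adj]
  exact ⟨hne, Or.inl h⟩

lemma Phi_proper (k : ℕ) (q0 : Fin 4 → Fin 4) (hq : Function.Injective q0) (s : ℕ → Bool)
    (h0 : s 0 = false) (hk : s (k+1) = false) :
    IsProperColoring (Qk k) (Phi (k+2) q0 s) := by
  have inj : ∀ i : ℕ, Function.Injective fun x => q0 (qseq s i x) :=
    fun i => hq.comp (qseq_inj s i)
  have key : ∀ u v : Fin (k+2) × Fin 4, qkRel k u v →
      Phi (k+2) q0 s u ≠ Phi (k+2) q0 s v := by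
    rintro ⟨i, ju⟩ ⟨i', jv⟩ h heq
    simp only [Phi] at heq
    rcases h with ⟨h1, h2⟩ | ⟨h1, h2⟩ | ⟨h1, h2, h3, h4⟩ | ⟨h1, h2, h3, h4⟩
    · subst h1; subst h2
      exact pos4_cyc (s (i:ℕ)) ju (inj (i:ℕ) heq)
    · rw [h1] at heq
      have := inj (i:ℕ) (heq : (fun x => q0 (qseq s (i:ℕ) x)) (pos4 (s (i:ℕ)) ju)
        = (fun x => q0 (qseq s (i:ℕ) x)) (stp (s (i:ℕ)) (s ((i:ℕ)+1)) (pos4 (s ((i:ℕ)+1)) jv)))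
      rcases h2 with h2 | h2
      · subst h2; exact stp_conn1 _ _ _ this
      · subst h2; exact stp_conn2 _ _ _ this
    · dsimp only at h1 h2 h3 h4
      rw [h1, h2, h3, h4, h0] at heq
      exact pos4_chord (inj 0 heq)
    · dsimp only at h1 h2 h3 h4
      rw [h1, h2, h3, h4, hk] at heq
      exact pos4_chord (by rw [← hk] at heq ⊢; exact inj (k+1) heq)
  intro u v hadj
  rw [Qk, SimpleGraph.fromRel_adj] at hadj
  rcases hadj with ⟨hne, h | h⟩
  · exact key u v h
  · exact (key v u h).symm

lemma classify (k : ℕ) (f : Fin (k+2) × Fin 4 → Fin 4) (hf : IsProperColoring (Qk k) f)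
    (hfII : f ((0 : Fin (k+2)), (1 : Fin 4)) = f ((0 : Fin (k+2)), (3 : Fin 4))) :
    ∃ q0 s, Function.Injective q0 ∧ s 0 = false ∧ s (k+1) = false ∧ f = Phi (k+2) q0 s := by
  have adj : ∀ u v : Fin (k+2) × Fin 4, qkRel k u v → u ≠ v → f u ≠ f v :=
    fun u v h hne => hf (qk_adj h hne)
  have vne2 : ∀ (i i' : Fin (k+2)) (j j' : Fin 4), j ≠ j' →
      ((i,j) : Fin (k+2) × Fin 4) ≠ (i',j') :=
    fun _ _ _ _ hj h => hj (congrArg Prod.snd h)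
  have vne1 : ∀ (i i' : Fin (k+2)) (j j' : Fin 4), i ≠ i' →
      ((i,j) : Fin (k+2) × Fin 4) ≠ (i',j') :=
    fun _ _ _ _ hi h => hi (congrArg Prod.fst h)
  have hzero : ((0 : Fin (k+2)) : ℕ) = 0 := rfl
  -- layer 0 data
  have hab : f (0, 0) ≠ f (0, 1) :=
    adj ((0 : Fin (k+2)), (0 : Fin 4)) ((0 : Fin (k+2)), (1 : Fin 4))
      (Or.inl ⟨rfl, show (1 : Fin 4) = 0 + 1 by decide⟩) (vne2 _ _ _ _ (by decide))
  have hbc : f (0, 1) ≠ f (0, 2) :=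
    adj ((0 : Fin (k+2)), (1 : Fin 4)) ((0 : Fin (k+2)), (2 : Fin 4))
      (Or.inl ⟨rfl, show (2 : Fin 4) = 1 + 1 by decide⟩) (vne2 _ _ _ _ (by decide))
  have hac : f (0, 0) ≠ f (0, 2) :=
    adj _ _ (Or.inr (Or.inr (Or.inl ⟨hzero, hzero, rfl, rfl⟩))) (vne2 _ _ _ _ (by decide))
  set q0 : Fin 4 → Fin 4 :=
    ![f (0,0), f (0,1), f (0,2), 2 - (f (0,0) + f (0,1) + f (0,2))] with hq0def
  have hq0 : Function.Injective q0 := layer0_inj _ _ _ hab hbc hac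
  have hlayer0 : ∀ j : Fin 4, f (0, j) = q0 (pos4 false j) := by
    intro j
    fin_cases j
    · rfl
    · rfl
    · rfl
    · exact hfII.symm
  have main : ∀ i : ℕ, i ≤ k+1 → ∃ s : ℕ → Bool, s 0 = false ∧
      ∀ i' : ℕ, i' ≤ i → ∀ hi' : i' < k + 2, ∀ j : Fin 4,
        f (⟨i', hi'⟩, j) = q0 (qseq s i' (pos4 (s i') j)) := by
    intro i
    induction i with
    | zero =>
      intro _
      refine ⟨fun _ => false, rfl, ?_⟩
      intro i' hi' hlt j
      have : i' = 0 := Nat.le_zero.mp hi'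
      subst this
      have : (⟨0, hlt⟩ : Fin (k+2)) = 0 := rfl
      rw [this]
      exact hlayer0 j
    | succ i ih =>
      intro h
      obtain ⟨s, hs0, hs⟩ := ih (by omega)
      have hilt : i < k + 2 := by omega
      have hi1lt : i + 1 < k + 2 := by omega
      have hmkne : (⟨i, hilt⟩ : Fin (k+2)) ≠ ⟨i+1, hi1lt⟩ := by
        intro hcon
        have := congrArg Fin.val hcon
        simp at this
      set L : Fin 4 → Fin 4 := fun j => f (⟨i+1, hi1lt⟩, j) with hL
      have hcyc : ∀ j, L j ≠ L (j+1) := fun j =>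
        adj _ _ (Or.inl ⟨rfl, rfl⟩) (vne2 _ _ _ _ (by revert j; decide))
      have hprev : ∀ j, f (⟨i, hilt⟩, j) = q0 (qseq s i (pos4 (s i) j)) :=
        fun j => hs i le_rfl hilt j
      have h1 : ∀ j, (fun x => q0 (qseq s i x)) (pos4 (s i) j) ≠ L j := by
        intro j
        show q0 (qseq s i (pos4 (s i) j)) ≠ L j
        rw [← hprev j]
        exact adj _ _ (Or.inr (Or.inl ⟨rfl, Or.inl rfl⟩)) (vne1 _ _ _ _ hmkne)
      have h2 : ∀ j, (fun x => q0 (qseq s i x)) (pos4 (s i) j) ≠ L (j+1) := by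
        intro j
        show q0 (qseq s i (pos4 (s i) j)) ≠ L (j+1)
        rw [← hprev j]
        exact adj _ _ (Or.inr (Or.inl ⟨rfl, Or.inr rfl⟩)) (vne1 _ _ _ _ hmkne)
      obtain ⟨b', hb'⟩ := step_exists' _ (hq0.comp (qseq_inj s i)) L (s i) hcyc h1 h2
      refine ⟨fun n => if n = i+1 then b' else s n, by simp [hs0], ?_⟩
      intro i' hi' hlt j
      rcases Nat.lt_or_ge i' (i+1) with hlt' | hge
      · have hle : i' ≤ i := by omega
        have hcong : qseq (fun n => if n = i+1 then b' else s n) i' = qseq s i' := by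
          apply qseq_congr
          intro n hn
          rw [if_neg (by omega)]
        have hsi' : (if i' = i+1 then b' else s i') = s i' := if_neg (by omega)
        show f (⟨i', hlt⟩, j) = q0 (qseq (fun n => if n = i+1 then b' else s n) i'
          (pos4 (if i' = i+1 then b' else s i') j))
        rw [hcong, hsi']
        exact hs i' hle hlt j
      · have : i' = i + 1 := by omega
        subst this
        have hsi1 : (if i+1 = i+1 then b' else s (i+1)) = b' := if_pos rfl
        have hcong : qseq (fun n => if n = i+1 then b' else s n) i = qseq s i := by
          apply qseq_congr
          intro n hn
          rw [if_neg (by omega)]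
        show L j = q0 (qseq (fun n => if n = i+1 then b' else s n) (i+1)
          (pos4 (if i+1 = i+1 then b' else s (i+1)) j))
        rw [hsi1]
        show L j = q0 (qseq (fun n => if n = i+1 then b' else s n) i
          (stp (if i = i+1 then b' else s i) (if i+1 = i+1 then b' else s (i+1))
            (pos4 b' j)))
        rw [hcong, hsi1, if_neg (by omega : ¬ i = i + 1)]
        exact hb' j
  obtain ⟨s, hs0, hs⟩ := main (k+1) le_rfl
  have hklt : k + 1 < k + 2 := by omega
  have hsk : s (k+1) = false := by
    by_contra hcon
    have htrue : s (k+1) = true := by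
      cases hval : s (k+1)
      · exact absurd hval hcon
      · rfl
    have e0 := hs (k+1) le_rfl hklt 0
    have e2 := hs (k+1) le_rfl hklt 2
    have : f (⟨k+1, hklt⟩, 0) = f (⟨k+1, hklt⟩, 2) := by
      rw [e0, e2, htrue, pos4_true_chord]
    exact adj _ _ (Or.inr (Or.inr (Or.inr ⟨rfl, rfl, rfl, rfl⟩)))
      (vne2 _ _ _ _ (by decide)) this
  refine ⟨q0, s, hq0, hs0, hsk, ?_⟩
  funext v
  obtain ⟨i, j⟩ := v
  have := hs i.1 (Nat.lt_succ_iff.mp i.isLt) i.isLt j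
  simpa [Phi] using this

lemma flip_step (k : ℕ) (q0 : Fin 4 → Fin 4) (hq : Function.Injective q0) (s : ℕ → Bool)
    (h0 : s 0 = false) (hk : s (k+1) = false) (m : ℕ) (hm : m + 1 ≤ k) :
    ColAdj (Qk k) (Phi (k+2) q0 s)
      (Phi (k+2) q0 (fun n => if n = m+1 then !(s n) else s n)) := by
  set s' : ℕ → Bool := fun n => if n = m+1 then !(s n) else s n with hs'def
  have hs'0 : s' 0 = false := by rw [hs'def]; simp [h0]
  have hs'k : s' (k+1) = false := by
    show (if k+1 = m+1 then !(s (k+1)) else s (k+1)) = false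
    rw [if_neg (by omega)]; exact hk
  have hs'of : ∀ n, n ≠ m+1 → s' n = s n := fun n hn => if_neg hn
  have hs'm1 : s' (m+1) = !(s (m+1)) := if_pos rfl
  have hqseq_le : ∀ n, n ≤ m → qseq s' n = qseq s n :=
    fun n hn => qseq_congr s' s n (fun j hj => hs'of j (by omega))
  have injm : Function.Injective (fun x => q0 (qseq s m x)) := hq.comp (qseq_inj s m)
  set c : Fin 4 := q0 (qseq s m (idx4 (s m))) with hcdef
  have hmlt : m < k + 2 := by omega
  refine ⟨Phi_proper k q0 hq s h0 hk, Phi_proper k q0 hq s' hs'0 hs'k, c, c, ?_, ?_⟩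
  · refine ⟨((⟨m, hmlt⟩ : Fin (k+2)), idx4 (s m)), ?_⟩
    show Phi (k+2) q0 s (⟨m, hmlt⟩, idx4 (s m)) = c
    show q0 (qseq s m (pos4 (s m) (idx4 (s m)))) = c
    rw [pos4_idx]
  · have aux : ∀ n, m+2 ≤ n → ∀ x, (q0 (qseq s' n x) = c ↔ q0 (qseq s n x) = c) := by
      intro n
      induction n with
      | zero => omega
      | succ n ihn =>
        intro hn x
        rcases Nat.lt_or_ge n (m+2) with hlt | hge
        · have hnm : n = m + 1 := by omega
          subst hnm
          show q0 (qseq s' m (stp (s' m) (s' (m+1)) (stp (s' (m+1)) (s' (m+2)) x))) = c ↔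
            q0 (qseq s m (stp (s m) (s (m+1)) (stp (s (m+1)) (s (m+2)) x))) = c
          rw [hqseq_le m le_rfl, hs'of m (by omega), hs'm1, hs'of (m+2) (by omega)]
          rw [hcdef]
          constructor
          · intro hh
            have := injm hh
            exact injm.eq_iff.mpr ((flip_tail (s m) (s (m+1)) (s (m+2)) x).mp this)
          · intro hh
            have := injm hh
            exact injm.eq_iff.mpr ((flip_tail (s m) (s (m+1)) (s (m+2)) x).mpr this)
        · have h1 : n ≠ m + 1 := by omega
          have h2 : n + 1 ≠ m + 1 := by omega
          show q0 (qseq s' n (stp (s' n) (s' (n+1)) x)) = c ↔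
            q0 (qseq s n (stp (s n) (s (n+1)) x)) = c
          rw [hs'of n h1, hs'of (n+1) h2]
          exact ihn hge _
    apply Set.ext
    rintro ⟨iF, j⟩
    simp only [Set.mem_preimage, Set.mem_singleton_iff]
    set i : ℕ := (iF : ℕ) with hidef
    show Phi (k+2) q0 s (iF, j) = c ↔ Phi (k+2) q0 s' (iF, j) = c
    show q0 (qseq s i (pos4 (s i) j)) = c ↔ q0 (qseq s' i (pos4 (s' i) j)) = c
    rcases Nat.lt_trichotomy i (m+1) with hlt | heq | hgt
    · rw [hqseq_le i (by omega), hs'of i (by omega)]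
    · rw [heq]
      have hL' : ∀ x, q0 (qseq s' (m+1) x) = q0 (qseq s m (stp (s m) (!(s (m+1))) x)) := by
        intro x
        show q0 (qseq s' m (stp (s' m) (s' (m+1)) x)) = _
        rw [hqseq_le m le_rfl, hs'of m (by omega), hs'm1]
      rw [hL', hs'm1]
      constructor
      · intro hh
        exfalso
        rw [hcdef] at hh
        exact flip_mid (s m) (s (m+1)) j
          (injm (show q0 (qseq s m (stp (s m) (s (m+1)) (pos4 (s (m+1)) j)))
            = q0 (qseq s m (idx4 (s m))) from hh))
      · intro hh
        exfalso
        rw [hcdef] at hh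
        exact flip_mid (s m) (!(s (m+1))) j (injm hh)
    · have : m + 2 ≤ i := hgt
      rw [hs'of i (by omega)]
      exact (aux i this _).symm

lemma phi_congr (k : ℕ) (q0 : Fin 4 → Fin 4) (s s' : ℕ → Bool)
    (h : ∀ n, n ≤ k+1 → s n = s' n) : Phi (k+2) q0 s = Phi (k+2) q0 s' := by
  funext v
  obtain ⟨i, j⟩ := v
  have hi : (i : ℕ) ≤ k + 1 := Nat.lt_succ_iff.mp i.isLt
  show q0 (qseq s i (pos4 (s i) j)) = q0 (qseq s' i (pos4 (s' i) j))
  rw [qseq_congr s s' i (fun n hn => h n (le_trans hn hi)), h i hi]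

lemma chain_to_false (k : ℕ) (q0 : Fin 4 → Fin 4) (hq : Function.Injective q0)
    (s : ℕ → Bool) (h0 : s 0 = false) (hk : s (k+1) = false) :
    Relation.ReflTransGen (ColAdj (Qk k)) (Phi (k+2) q0 s)
      (Phi (k+2) q0 (fun _ => false)) := by
  have main : ∀ n (s : ℕ → Bool), s 0 = false → s (k+1) = false →
      ((Finset.Icc 1 k).filter (fun i => s i = true)).card = n →
      Relation.ReflTransGen (ColAdj (Qk k)) (Phi (k+2) q0 s)
        (Phi (k+2) q0 (fun _ => false)) := by
    intro n
    induction n with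
    | zero =>
      intro s h0 hk hc
      have hemp := Finset.card_eq_zero.mp hc
      have hall : ∀ n, n ≤ k+1 → s n = false := by
        intro n hn
        rcases Nat.eq_zero_or_pos n with h | h
        · subst h; exact h0
        rcases Nat.lt_or_ge n (k+1) with h' | h'
        · by_contra hcon
          have htrue : s n = true := by
            cases hv : s n
            · exact absurd hv hcon
            · rfl
          have : n ∈ (Finset.Icc 1 k).filter (fun i => s i = true) :=
            Finset.mem_filter.mpr ⟨Finset.mem_Icc.mpr ⟨h, by omega⟩, htrue⟩
          rw [hemp] at this
          exact absurd this (Finset.notMem_empty n)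
        · have : n = k + 1 := by omega
          subst this; exact hk
      rw [phi_congr k q0 s (fun _ => false) hall]
    | succ n ih =>
      intro s h0 hk hc
      have hne : ((Finset.Icc 1 k).filter (fun i => s i = true)).Nonempty :=
        Finset.card_pos.mp (by omega)
      obtain ⟨i0, hi0⟩ := hne
      obtain ⟨hIcc, hst⟩ := Finset.mem_filter.mp hi0
      obtain ⟨h1, h2⟩ := Finset.mem_Icc.mp hIcc
      obtain ⟨m, rfl⟩ : ∃ m, i0 = m + 1 := ⟨i0 - 1, by omega⟩
      set s' : ℕ → Bool := fun n => if n = m+1 then !(s n) else s n with hs'def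
      have step := flip_step k q0 hq s h0 hk m (by omega)
      have hs'0 : s' 0 = false := by
        show (if 0 = m+1 then !(s 0) else s 0) = false
        rw [if_neg (by omega)]; exact h0
      have hs'k : s' (k+1) = false := by
        show (if k+1 = m+1 then !(s (k+1)) else s (k+1)) = false
        rw [if_neg (by omega)]; exact hk
      have hcard : ((Finset.Icc 1 k).filter (fun i => s' i = true)).card = n := by
        have hset : (Finset.Icc 1 k).filter (fun i => s' i = true)
            = ((Finset.Icc 1 k).filter (fun i => s i = true)).erase (m+1) := by
          ext j
          simp only [Finset.mem_filter, Finset.mem_erase]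
          constructor
          · rintro ⟨hj1, hj2⟩
            by_cases hj : j = m + 1
            · subst hj
              rw [hs'def] at hj2
              simp only [if_pos rfl] at hj2
              rw [hst] at hj2
              simp at hj2
            · refine ⟨hj, hj1, ?_⟩
              have hj2' : (if j = m+1 then !(s j) else s j) = true := hj2
              rwa [if_neg hj] at hj2'
          · rintro ⟨hj, hj1, hj2⟩
            refine ⟨hj1, ?_⟩
            show (if j = m+1 then !(s j) else s j) = true
            rw [if_neg hj]
            exact hj2
        rw [hset, Finset.card_erase_of_mem hi0, hc]
        omega
      exact Relation.ReflTransGen.head step (ih s' hs'0 hs'k hcard)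
  exact main _ s h0 hk rfl

lemma perm_step {V : Type*} (G : SimpleGraph V) (v0 : V) (h : V → Fin 4)
    (hh : IsProperColoring G h) (σ : Fin 4 → Fin 4) (hσ : Function.Injective σ) :
    ColAdj G (σ ∘ h) h := by
  refine ⟨fun u v huv he => hh huv (hσ he), hh, σ (h v0), h v0, ⟨v0, rfl⟩, ?_⟩
  ext v
  simp only [Set.mem_preimage, Set.mem_singleton_iff, Function.comp_apply]
  exact hσ.eq_iff

lemma colAdj_symm {V : Type*} {G : SimpleGraph V} : Symmetric (ColAdj G) := by
  rintro f g ⟨hf, hg, c, c', hne, heq⟩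
  exact ⟨hg, hf, c', c, heq ▸ hne, heq.symm⟩

lemma classes_connected {V : Type*} (G : SimpleGraph V) (f g : V → Fin 4)
    (hf : IsProperColoring G f)
    (hrt : Relation.ReflTransGen (ColAdj G) f g) :
    ∀ A B : colorClasses G, (A : Set V) ∈ colPart f → (B : Set V) ∈ colPart g →
      (colorComplex G).connectedComponentMk A = (colorComplex G).connectedComponentMk B := by
  have same : ∀ (h : V → Fin 4), IsProperColoring G h → ∀ A B : colorClasses G,
      (A : Set V) ∈ colPart h → (B : Set V) ∈ colPart h →
      (colorComplex G).connectedComponentMk A = (colorComplex G).connectedComponentMk B := by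
    intro h hh A B hA hB
    by_cases hab : A = B
    · rw [hab]
    · apply SimpleGraph.ConnectedComponent.sound
      apply SimpleGraph.Adj.reachable
      rw [colorComplex, SimpleGraph.fromRel_adj]
      exact ⟨hab, Or.inl ⟨h, hh, hA.2, hB.2⟩⟩
  induction hrt with
  | refl => exact same f hf
  | @tail b c hfb hbc ih =>
    intro A B hA hB
    obtain ⟨hbp, hcp, c0, c0', hne, heq⟩ := hbc
    have hCcl : (b ⁻¹' {c0}) ∈ colorClasses G := ⟨hne, b, c0, hbp, rfl⟩
    have h1 : (A : Set V) ∈ colPart f := hA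
    have h2 : ((⟨b ⁻¹' {c0}, hCcl⟩ : colorClasses G) : Set V) ∈ colPart b := ⟨hne, c0, rfl⟩
    have h3 : ((⟨b ⁻¹' {c0}, hCcl⟩ : colorClasses G) : Set V) ∈ colPart c := ⟨hne, c0', heq⟩
    exact (ih A ⟨b ⁻¹' {c0}, hCcl⟩ h1 h2).trans (same c hcp _ B h3 hB)

theorem Qk_typeII_connected (k : ℕ) (f g : Fin (k + 2) × Fin 4 → Fin 4)
    (hf : IsProperColoring (Qk k) f) (hg : IsProperColoring (Qk k) g)
    (hfII : f ((0 : Fin (k + 2)), (1 : Fin 4)) = f ((0 : Fin (k + 2)), (3 : Fin 4)))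
    (hgII : g ((0 : Fin (k + 2)), (1 : Fin 4)) = g ((0 : Fin (k + 2)), (3 : Fin 4))) :
    Relation.ReflTransGen (ColAdj (Qk k)) f g ∧
    ∀ A B : colorClasses (Qk k),
      (A : Set (Fin (k + 2) × Fin 4)) ∈ colPart f →
      (B : Set (Fin (k + 2) × Fin 4)) ∈ colPart g →
      (colorComplex (Qk k)).connectedComponentMk A
        = (colorComplex (Qk k)).connectedComponentMk B := by
  have part1 : Relation.ReflTransGen (ColAdj (Qk k)) f g := by
    obtain ⟨q0f, sf, hqf, hf0, hfk, hfeq⟩ := classify k f hf hfII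
    obtain ⟨q0g, sg, hqg, hg0, hgk, hgeq⟩ := classify k g hg hgII
    have c1 := chain_to_false k q0f hqf sf hf0 hfk
    have c2 := chain_to_false k q0g hqg sg hg0 hgk
    have hidproper : IsProperColoring (Qk k) (Phi (k+2) id (fun _ => false)) :=
      Phi_proper k id (fun _ _ h => h) _ rfl rfl
    have p1 : ColAdj (Qk k) (Phi (k+2) q0f (fun _ => false))
        (Phi (k+2) id (fun _ => false)) :=
      perm_step (Qk k) ((0 : Fin (k+2)), (0 : Fin 4)) (Phi (k+2) id (fun _ => false))
        hidproper q0f hqf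
    have p2 : ColAdj (Qk k) (Phi (k+2) q0g (fun _ => false))
        (Phi (k+2) id (fun _ => false)) :=
      perm_step (Qk k) ((0 : Fin (k+2)), (0 : Fin 4)) (Phi (k+2) id (fun _ => false))
        hidproper q0g hqg
    have sym : ∀ {a b}, Relation.ReflTransGen (ColAdj (Qk k)) a b →
        Relation.ReflTransGen (ColAdj (Qk k)) b a := by
      intro a b hab
      induction hab with
      | refl => exact Relation.ReflTransGen.refl
      | tail _ hbc ih => exact Relation.ReflTransGen.head (colAdj_symm hbc) ih
    rw [hfeq, hgeq]
    exact (c1.trans (Relation.ReflTransGen.single p1)).trans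
      (sym (c2.trans (Relation.ReflTransGen.single p2)))
  exact ⟨part1, classes_connected (Qk k) f g hf part1⟩
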